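/- Let ν be a density matrix on C²⊗C^d whose reduced state ν_A = Tr_B(ν) has spectrum {(1−η)/2, (1+η)/2} for some η ∈ [0,1). Define μ = (ν_A^{−1/2} ⊗ I) ν (ν_A^{−1/2} ⊗ I). Then the operator inequality μ ≥ s(η)·ν − t(η)·(I/2 ⊗ ν_B) holds, where s(η) = 2/√(1−η²), t(η) = 4/√(1−η²) − 4/(1+η), and ν_B = Tr_A(ν). -/

import Mathlib

open Matrix Kronecker ComplexOrder

noncomputable section

/-- Partial trace over the second tensor factor. -/
def ptraceB {α β : Type*} [Fintype β] (ρ : Matrix (α × β) (α × β) ℂ) : Matrix α α ℂ :=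
  Matrix.of fun a a' => ∑ b, ρ (a, b) (a', b)

/-- Partial trace over the first tensor factor. -/
def ptraceA {α β : Type*} [Fintype α] (ρ : Matrix (α × β) (α × β) ℂ) : Matrix β β ℂ :=
  Matrix.of fun b b' => ∑ a, ρ (a, b) (a, b')

/-- The positive semidefinite square root of a positive semidefinite matrix
(as defined in Mathlib before its removal). -/
def Matrix.PosSemidef.sqrt {n 𝕜 : Type*} [Fintype n] [DecidableEq n] [RCLike 𝕜]
    {A : Matrix n n 𝕜} (hA : A.PosSemidef) : Matrix n n 𝕜 :=
  hA.1.eigenvectorUnitary.1 * diagonal ((↑) ∘ (√·) ∘ hA.1.eigenvalues) *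
    (star hA.1.eigenvectorUnitary : Matrix n n 𝕜)

def sFun (η : ℝ) : ℝ := 2 / Real.sqrt (1 - η ^ 2)

def tFun (η : ℝ) : ℝ := 4 / Real.sqrt (1 - η ^ 2) - 4 / (1 + η)

set_option maxHeartbeats 2000000 in
lemma core {d : ℕ} (ν : Matrix (Fin 2 × Fin d) (Fin 2 × Fin d) ℂ) (hν : ν.PosSemidef)
    (p q : Fin 2) (hpq : p ≠ q) (u v : ℝ) (hv : 0 ≤ v) (huv : v ≤ u) :
    ((Matrix.diagonal (fun i : Fin 2 × Fin d => (if i.1 = p then (u:ℂ) else (v:ℂ)))) * ν *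
        (Matrix.diagonal (fun i : Fin 2 × Fin d => (if i.1 = p then (u:ℂ) else (v:ℂ))))
      - (((u*v : ℝ) : ℂ) • ν
          - ((v*(u-v) : ℝ) : ℂ) • ((1 : Matrix (Fin 2) (Fin 2) ℂ) ⊗ₖ ptraceA ν))).PosSemidef := by
  set c1 : ℝ := Real.sqrt (u^2 - v^2) with hc1
  set c2 : ℝ := Real.sqrt (v*(u-v)) with hc2
  set B1 : Matrix (Fin 2 × Fin d) (Fin 2 × Fin d) ℂ :=
    Matrix.of (fun i j => if i.1 = p ∧ j.1 = p ∧ i.2 = j.2 then (c1:ℂ) else 0) with hB1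
  set B2 : Matrix (Fin 2 × Fin d) (Fin 2 × Fin d) ℂ :=
    Matrix.of (fun i j => if i.1 = q ∧ j.1 = p ∧ i.2 = j.2 then (c2:ℂ) else 0) with hB2
  set B3 : Matrix (Fin 2 × Fin d) (Fin 2 × Fin d) ℂ :=
    Matrix.of (fun i j => if i.1 = p ∧ j.1 = q ∧ i.2 = j.2 then (c2:ℂ) else 0) with hB3
  have hc1sq : (c1:ℂ) * (c1:ℂ) = ((u^2 - v^2 : ℝ):ℂ) := by
    rw [← Complex.ofReal_mul, Real.mul_self_sqrt (by nlinarith)]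
  have hc2sq : (c2:ℂ) * (c2:ℂ) = ((v*(u-v) : ℝ):ℂ) := by
    rw [← Complex.ofReal_mul, Real.mul_self_sqrt (by nlinarith)]
  have expand : ∀ (s t : Fin 2) (c : ℂ) (a a' : Fin 2) (b b' : Fin d),
      ((Matrix.of (fun i j : Fin 2 × Fin d => if i.1 = s ∧ j.1 = t ∧ i.2 = j.2 then c else 0))ᴴ * ν *
       (Matrix.of (fun i j : Fin 2 × Fin d => if i.1 = s ∧ j.1 = t ∧ i.2 = j.2 then c else 0))) (a,b) (a',b')
        = (if a = t then starRingEnd ℂ c else 0) * ν (s,b) (s,b') * (if a' = t then c else 0) := by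
    intro s t c a a' b b'
    simp only [Matrix.mul_apply, Matrix.conjTranspose_apply, Fintype.sum_prod_type,
      Matrix.of_apply, ite_and, apply_ite (star : ℂ → ℂ), star_zero, ite_mul, mul_ite,
      zero_mul, mul_zero, Finset.sum_ite_irrel, Finset.sum_const_zero,
      Finset.sum_ite_eq, Finset.sum_ite_eq', Finset.mem_univ, if_true]
    by_cases h1 : a' = t <;> by_cases h2 : a = t <;>
      simp [h1, h2, mul_comm, mul_assoc, RCLike.star_def]
  have key : (Matrix.diagonal (fun i : Fin 2 × Fin d => (if i.1 = p then (u:ℂ) else (v:ℂ)))) * ν *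
        (Matrix.diagonal (fun i : Fin 2 × Fin d => (if i.1 = p then (u:ℂ) else (v:ℂ))))
      - (((u*v : ℝ) : ℂ) • ν
          - ((v*(u-v) : ℝ) : ℂ) • ((1 : Matrix (Fin 2) (Fin 2) ℂ) ⊗ₖ ptraceA ν))
      = B1ᴴ * ν * B1 + (B2ᴴ * ν * B2 + B3ᴴ * ν * B3) := by
    ext ⟨a,b⟩ ⟨a',b'⟩
    rw [hB1, hB2, hB3]
    rw [Matrix.add_apply, Matrix.add_apply, expand p p _ a a' b b', expand q p _ a a' b b',
      expand p q _ a a' b b']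
    simp only [Matrix.sub_apply, Matrix.smul_apply, Matrix.diagonal_mul, Matrix.mul_diagonal,
      Matrix.kroneckerMap_apply, Matrix.one_apply, ptraceA, Matrix.of_apply, Fin.sum_univ_two,
      Complex.conj_ofReal, smul_eq_mul]
    fin_cases p <;> fin_cases q <;> (try exact absurd rfl hpq) <;>
      fin_cases a <;> fin_cases a' <;>
        simp only [Fin.isValue, if_true, if_false, Prod.mk.injEq, reduceIte,
          Fin.zero_eq_one_iff, Fin.one_eq_zero_iff, Nat.succ_ne_self, ite_true, ite_false,
          one_ne_zero, zero_ne_one, mul_zero, zero_mul, mul_one, one_mul, add_zero, zero_add] <;>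
        push_cast <;> ring_nf <;> simp only [pow_two, hc1sq, hc2sq] <;> push_cast <;> ring
  rw [key]
  exact ((hν.conjTranspose_mul_mul_same B1).add
    ((hν.conjTranspose_mul_mul_same B2).add (hν.conjTranspose_mul_mul_same B3)))

set_option maxHeartbeats 2000000 in
theorem rescaling_marginal (d : ℕ)
    (ν : Matrix (Fin 2 × Fin d) (Fin 2 × Fin d) ℂ)
    (hν : ν.PosSemidef) (htr : ν.trace = 1)
    (η : ℝ) (hη : η ∈ Set.Ico (0 : ℝ) 1)
    (hA : (ptraceB ν).PosSemidef)
    (hspec : spectrum ℂ (ptraceB ν) = {(((1 - η) / 2 : ℝ) : ℂ), (((1 + η) / 2 : ℝ) : ℂ)}) :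
    ((hA.sqrt⁻¹ ⊗ₖ (1 : Matrix (Fin d) (Fin d) ℂ)) * ν *
        (hA.sqrt⁻¹ ⊗ₖ (1 : Matrix (Fin d) (Fin d) ℂ))
      - ((sFun η : ℂ) • ν
          - (tFun η : ℂ) • (((1 / 2 : ℂ) • (1 : Matrix (Fin 2) (Fin 2) ℂ)) ⊗ₖ ptraceA ν))).PosSemidef := by
  obtain ⟨hη0, hη1⟩ := hη
  set α : ℝ := (1 - η) / 2 with hαdef
  set β : ℝ := (1 + η) / 2 with hβdef
  have hα0 : 0 < α := by simp [hαdef]; linarith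
  have hβ0 : 0 < β := by simp [hβdef]; linarith
  set ev : Fin 2 → ℝ := hA.1.eigenvalues with hevdef
  set U : Matrix (Fin 2) (Fin 2) ℂ := (hA.1.eigenvectorUnitary : Matrix (Fin 2) (Fin 2) ℂ) with hUdef
  have hU1 : U * star U = 1 := (Matrix.mem_unitaryGroup_iff).mp hA.1.eigenvectorUnitary.2
  have hU1' : star U * U = 1 := (Matrix.mem_unitaryGroup_iff').mp hA.1.eigenvectorUnitary.2
  -- eigenvalue facts
  have hmemR : ∀ x : ℝ, x ∈ spectrum ℝ (ptraceB ν) ↔ (x : ℂ) ∈ spectrum ℂ (ptraceB ν) := by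
    intro x
    rw [← spectrum.algebraMap_mem_iff ℂ]
    norm_num [Complex.coe_algebraMap]
  have hev_or : ∀ i, ev i = α ∨ ev i = β := by
    intro i
    have h1 : ev i ∈ spectrum ℝ (ptraceB ν) := hA.1.eigenvalues_mem_spectrum_real i
    have h2 := (hmemR (ev i)).mp h1
    rw [hspec] at h2
    rcases h2 with h | h
    · left; exact_mod_cast h
    · right; exact_mod_cast (Set.mem_singleton_iff.mp h)
  have hexα : ∃ i, ev i = α := by
    have : (α : ℂ) ∈ spectrum ℂ (ptraceB ν) := by rw [hspec]; left; rfl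
    have := (hmemR α).mpr this
    rw [hA.1.spectrum_real_eq_range_eigenvalues] at this
    exact this
  have hexβ : ∃ i, ev i = β := by
    have : (β : ℂ) ∈ spectrum ℂ (ptraceB ν) := by rw [hspec]; right; rfl
    have := (hmemR β).mpr this
    rw [hA.1.spectrum_real_eq_range_eigenvalues] at this
    exact this
  obtain ⟨p, q, hpq, hp, hq⟩ : ∃ p q : Fin 2, p ≠ q ∧ ev p = α ∧ ev q = β := by
    obtain ⟨i, hi⟩ := hexα
    obtain ⟨j, hj⟩ := hexβ
    by_cases hij : i = j
    · subst hij
      have hab : α = β := by rw [← hi, hj]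
      refine ⟨i, if i = 0 then 1 else 0, ?_, hi, ?_⟩
      · fin_cases i <;> simp
      · rcases hev_or (if i = 0 then 1 else 0) with h | h
        · rw [h, hab]
        · exact h
    · exact ⟨i, j, hij, hi, hj⟩
  have hevpos : ∀ i, 0 < ev i := by
    intro i; rcases hev_or i with h | h <;> rw [h] <;> [exact hα0; exact hβ0]
  -- u and v
  set u : ℝ := (Real.sqrt α)⁻¹ with hudef
  set v : ℝ := (Real.sqrt β)⁻¹ with hvdef
  have hsa0 : 0 < Real.sqrt α := Real.sqrt_pos.mpr hα0
  have hsb0 : 0 < Real.sqrt β := Real.sqrt_pos.mpr hβ0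
  have hv0 : 0 ≤ v := by positivity
  have huv : v ≤ u := by
    apply inv_anti₀ hsa0
    exact Real.sqrt_le_sqrt (by simp [hαdef, hβdef]; linarith)
  have hone : (1:ℝ) - η^2 > 0 := by nlinarith
  have hs1 : Real.sqrt (1 - η^2) > 0 := Real.sqrt_pos.mpr hone
  have h4 : Real.sqrt (4:ℝ) = 2 := by
    rw [show (4:ℝ) = 2^2 by norm_num, Real.sqrt_sq (by norm_num)]
  have hsuv : sFun η = u * v := by
    rw [sFun, hudef, hvdef, ← mul_inv, ← Real.sqrt_mul hα0.le,
      show α * β = (1 - η^2)/4 by rw [hαdef, hβdef]; ring,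
      Real.sqrt_div hone.le, h4, inv_div]
  have htuv : tFun η = 2 * (v * (u - v)) := by
    have hv2 : v * v = 2 / (1 + η) := by
      rw [hvdef, ← mul_inv, Real.mul_self_sqrt hβ0.le, hβdef]
      rw [inv_div]
    have : v * (u - v) = u * v - v * v := by ring
    rw [tFun, this, hv2, ← hsuv, sFun]
    ring
  -- sqrt inverse
  have hsqrt : hA.sqrt = U * Matrix.diagonal ((↑) ∘ Real.sqrt ∘ ev) * star U := rfl
  have hinv : hA.sqrt⁻¹ =
      U * Matrix.diagonal (fun i => (((Real.sqrt (ev i))⁻¹ : ℝ) : ℂ)) * star U := by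
    apply Matrix.inv_eq_right_inv
    rw [hsqrt]
    have hd : Matrix.diagonal ((↑) ∘ Real.sqrt ∘ ev : Fin 2 → ℂ) *
        Matrix.diagonal (fun i => (((Real.sqrt (ev i))⁻¹ : ℝ) : ℂ)) = 1 := by
      rw [Matrix.diagonal_mul_diagonal, ← Matrix.diagonal_one]
      apply congrArg Matrix.diagonal
      funext i
      have hne : ((Real.sqrt (ev i) : ℝ) : ℂ) ≠ 0 := by
        exact_mod_cast ne_of_gt (Real.sqrt_pos.mpr (hevpos i))
      simp only [Function.comp_apply, Complex.ofReal_inv]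
      exact mul_inv_cancel₀ hne
    calc U * Matrix.diagonal ((↑) ∘ Real.sqrt ∘ ev) * star U *
          (U * Matrix.diagonal (fun i => (((Real.sqrt (ev i))⁻¹ : ℝ) : ℂ)) * star U)
        = U * Matrix.diagonal ((↑) ∘ Real.sqrt ∘ ev) * (star U * U) *
          Matrix.diagonal (fun i => (((Real.sqrt (ev i))⁻¹ : ℝ) : ℂ)) * star U := by
          noncomm_ring
      _ = 1 := by rw [hU1', mul_one, mul_assoc U, hd, mul_one, hU1]
  have hfun : (fun i => (((Real.sqrt (ev i))⁻¹ : ℝ) : ℂ)) =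
      (fun i : Fin 2 => if i = p then (u:ℂ) else (v:ℂ)) := by
    funext i
    have hcover : i = p ∨ i = q := by
      fin_cases i <;> fin_cases p <;> fin_cases q <;> simp_all
    rcases hcover with h | h
    · subst h; simp [hp, hudef]
    · subst h
      simp [hq, hvdef, Ne.symm hpq]
  -- Kronecker unitary
  set W : Matrix (Fin 2 × Fin d) (Fin 2 × Fin d) ℂ := U ⊗ₖ (1 : Matrix (Fin d) (Fin d) ℂ) with hWdef
  have hWs : Wᴴ = (star U) ⊗ₖ (1 : Matrix (Fin d) (Fin d) ℂ) := by
    ext ⟨a,b⟩ ⟨a',b'⟩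
    simp only [hWdef, Matrix.conjTranspose_apply, Matrix.kroneckerMap_apply, Matrix.one_apply,
      Matrix.star_apply, mul_ite, mul_one, mul_zero, apply_ite (star : ℂ → ℂ), star_zero]
    by_cases h : b = b' <;> simp [h, eq_comm]
  have hWW : W * Wᴴ = 1 := by
    rw [hWs, hWdef, ← Matrix.mul_kronecker_mul, hU1, Matrix.one_mul, Matrix.one_kronecker_one]
  have hWW' : Wᴴ * W = 1 := by
    rw [hWs, hWdef, ← Matrix.mul_kronecker_mul, hU1', Matrix.one_mul, Matrix.one_kronecker_one]
  have hν' : (Wᴴ * ν * W).PosSemidef := hν.conjTranspose_mul_mul_same W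
  have hνback : W * (Wᴴ * ν * W) * Wᴴ = ν := by
    calc W * (Wᴴ * ν * W) * Wᴴ = (W * Wᴴ) * ν * (W * Wᴴ) := by noncomm_ring
    _ = ν := by rw [hWW, Matrix.one_mul, Matrix.mul_one]
  -- entries of conjugated matrix
  have hν'app : ∀ (a a' : Fin 2) (b b' : Fin d), (Wᴴ * ν * W) (a,b) (a',b')
      = ∑ c : Fin 2, ∑ c' : Fin 2, star (U c a) * ν (c,b) (c',b') * U c' a' := by
    intro a a' b b'
    rw [hWs]
    simp only [hWs, hWdef, Matrix.mul_apply, Fintype.sum_prod_type, Matrix.kroneckerMap_apply,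
      Matrix.one_apply, Matrix.star_apply, mul_ite, ite_mul, mul_one, one_mul, mul_zero,
      zero_mul, Finset.sum_ite_irrel, Finset.sum_const_zero, Finset.sum_ite_eq,
      Finset.sum_ite_eq', Finset.mem_univ, if_true, Finset.sum_mul, Finset.mul_sum]
    rw [Finset.sum_comm]
    try (apply Finset.sum_congr rfl; intro c _;
         apply Finset.sum_congr rfl; intro c' _; ring)
  have hUU : ∀ c c' : Fin 2, ∑ a, U c a * star (U c' a) = if c = c' then 1 else 0 := by
    intro c c'
    have h := congrFun (congrFun hU1 c) c'
    simpa [Matrix.mul_apply, Matrix.one_apply, Matrix.star_apply] using h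
  have hsum : ∀ (c c' : Fin 2) (X : ℂ), ∑ a : Fin 2, star (U c a) * X * U c' a
      = X * (if c' = c then 1 else 0) := by
    intro c c' X
    have h := hUU c' c
    rw [Fin.sum_univ_two] at h ⊢
    by_cases hcc : c' = c <;> simp only [hcc, if_true, if_false] at h ⊢ <;>
      linear_combination X * h
  have hptr : ptraceA (Wᴴ * ν * W) = ptraceA ν := by
    ext b b'
    simp only [ptraceA, Matrix.of_apply]
    calc ∑ a, (Wᴴ * ν * W) (a,b) (a,b')
        = ∑ a, ∑ c, ∑ c', star (U c a) * ν (c,b) (c',b') * U c' a := by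
          apply Finset.sum_congr rfl; intro a _; exact hν'app a a b b'
      _ = ∑ c, ∑ c', ∑ a, star (U c a) * ν (c,b) (c',b') * U c' a := by
          rw [Finset.sum_comm]
          apply Finset.sum_congr rfl; intro c _
          rw [Finset.sum_comm]
      _ = ∑ c, ∑ c', ν (c,b) (c',b') * (if c' = c then 1 else 0) := by
          apply Finset.sum_congr rfl; intro c _
          apply Finset.sum_congr rfl; intro c' _
          exact hsum c c' _
      _ = ∑ a, ν (a,b) (a,b') := by
          simp [mul_ite, mul_one, mul_zero]
  -- the diagonal matrix
  set Dx : Matrix (Fin 2 × Fin d) (Fin 2 × Fin d) ℂ :=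
    Matrix.diagonal (fun i : Fin 2 × Fin d => (if i.1 = p then (u:ℂ) else (v:ℂ))) with hDxdef
  have hDx : (Matrix.diagonal (fun i : Fin 2 => if i = p then (u:ℂ) else v)) ⊗ₖ
      (1 : Matrix (Fin d) (Fin d) ℂ) = Dx := by
    rw [← Matrix.diagonal_one, Matrix.diagonal_kronecker_diagonal, hDxdef]
    apply congrArg Matrix.diagonal
    funext i
    simp
  have hXkron : hA.sqrt⁻¹ ⊗ₖ (1 : Matrix (Fin d) (Fin d) ℂ) = W * Dx * Wᴴ := by
    rw [hinv, hfun, hWs, hWdef, ← hDx, ← Matrix.mul_kronecker_mul, ← Matrix.mul_kronecker_mul,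
      Matrix.one_mul, Matrix.one_mul]
  have h1P : W * ((1 : Matrix (Fin 2) (Fin 2) ℂ) ⊗ₖ ptraceA ν) * Wᴴ
      = (1 : Matrix (Fin 2) (Fin 2) ℂ) ⊗ₖ ptraceA ν := by
    rw [hWs, hWdef, ← Matrix.mul_kronecker_mul, ← Matrix.mul_kronecker_mul,
      Matrix.mul_one, Matrix.one_mul, Matrix.mul_one, hU1]
  -- constants
  have hsC : ((sFun η : ℝ) : ℂ) = ((u * v : ℝ) : ℂ) := by rw [hsuv]
  have htC : ((tFun η : ℝ) : ℂ) * (1/2 : ℂ) = ((v * (u - v) : ℝ) : ℂ) := by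
    rw [htuv]; push_cast; ring
  -- assemble
  rw [hXkron, Matrix.smul_kronecker, smul_smul, hsC, htC]
  have hfinal : (W * Dx * Wᴴ) * ν * (W * Dx * Wᴴ)
      - (((u*v : ℝ) : ℂ) • ν - ((v*(u-v) : ℝ) : ℂ) • ((1 : Matrix (Fin 2) (Fin 2) ℂ) ⊗ₖ ptraceA ν))
      = W * (Dx * (Wᴴ * ν * W) * Dx
          - (((u*v : ℝ) : ℂ) • (Wᴴ * ν * W)
            - ((v*(u-v) : ℝ) : ℂ) • ((1 : Matrix (Fin 2) (Fin 2) ℂ) ⊗ₖ ptraceA (Wᴴ * ν * W)))) * Wᴴ := by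
    rw [hptr, Matrix.mul_sub, Matrix.sub_mul, Matrix.mul_sub, Matrix.sub_mul]
    congr 1
    · simp only [Matrix.mul_assoc]
    · congr 1
      · rw [Matrix.mul_smul, Matrix.smul_mul, hνback]
      · rw [Matrix.mul_smul, Matrix.smul_mul, h1P]
  rw [hfinal]
  exact (core (Wᴴ * ν * W) hν' p q hpq u v hv0 huv).mul_mul_conjTranspose_same W
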